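/- arXiv:2512.23468 — 2 statements merged into one kernel-verified Lean document; each statement's English description precedes it below -/
import Mathlib

section
/- Uniqueness of minimum s-t cut under star-stitched weights: let G' = (V, E) be a finite simple graph with weights w : E → ℕ, and fix s ∈ V such that E contains all star edges {(s,v) : v ∈ V, v ≠ s}. Define w_s(e) = 1 if e is incident to s and 0 otherwise, and the stitched weight [w, w_s](e) = (n+1)·w(e) + w_s(e) where n = |V|. Then for every t ∈ V ∖ {s}, there is a unique subset S ⊆ V with s ∈ S, t ∉ S minimizing [w, w_s](cut(S)) over all such subsets. -/
open Finset
open scoped Classical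

/-- The weight of the cut induced by `S`. -/
noncomputable def cutWeight {V : Type*} (E : Finset (Sym2 V)) (w : Sym2 V → ℕ)
    (S : Finset V) : ℕ :=
  ∑ e ∈ E.filter (fun e => (∃ u ∈ e, u ∈ S) ∧ ∃ u ∈ e, u ∉ S), w e

/-- Indicator weight of edges incident to `s` (the star at `s`). -/
noncomputable def starWeight {V : Type*} (s : V) : Sym2 V → ℕ :=
  fun e => if s ∈ e then 1 else 0

lemma cutWeight_eq {V : Type*} (E : Finset (Sym2 V)) (w : Sym2 V → ℕ) (S : Finset V) :
    cutWeight E w S = ∑ e ∈ E, if (∃ u ∈ e, u ∈ S) ∧ ∃ u ∈ e, u ∉ S then w e else 0 :=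
  by rw [cutWeight, Finset.sum_filter]

lemma cross_submod {V : Type*} (S T : Finset V) (e : Sym2 V) (m : ℕ) :
    ((if (∃ u ∈ e, u ∈ S ∪ T) ∧ ∃ u ∈ e, u ∉ S ∪ T then m else 0) +
      if (∃ u ∈ e, u ∈ S ∩ T) ∧ ∃ u ∈ e, u ∉ S ∩ T then m else 0) ≤
    ((if (∃ u ∈ e, u ∈ S) ∧ ∃ u ∈ e, u ∉ S then m else 0) +
      if (∃ u ∈ e, u ∈ T) ∧ ∃ u ∈ e, u ∉ T then m else 0) := by
  induction e using Sym2.ind with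
  | _ a b =>
    by_cases haS : a ∈ S <;> by_cases hbS : b ∈ S <;> by_cases haT : a ∈ T <;>
      by_cases hbT : b ∈ T <;>
      simp [Sym2.mem_iff, Finset.mem_union, Finset.mem_inter, haS, hbS, haT, hbT]

lemma cut_submod {V : Type*} (E : Finset (Sym2 V)) (w : Sym2 V → ℕ) (S T : Finset V) :
    cutWeight E w (S ∪ T) + cutWeight E w (S ∩ T) ≤ cutWeight E w S + cutWeight E w T := by
  simp only [cutWeight_eq, ← Finset.sum_add_distrib]
  exact Finset.sum_le_sum fun e _ => cross_submod S T e (w e)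

lemma star_cut {V : Type*} [Fintype V] (E : Finset (Sym2 V)) (s : V)
    (hstar : ∀ v : V, v ≠ s → s(s, v) ∈ E) (S : Finset V) (hs : s ∈ S) :
    cutWeight E (starWeight s) S = Fintype.card V - S.card := by
  have h1 : cutWeight E (starWeight s) S =
      ((E.filter (fun e => (∃ u ∈ e, u ∈ S) ∧ ∃ u ∈ e, u ∉ S)).filter
        (fun e => s ∈ e)).card := by
    rw [cutWeight]
    simp only [starWeight, Finset.sum_boole]
    norm_cast
    congr
  have h2 : (E.filter (fun e => (∃ u ∈ e, u ∈ S) ∧ ∃ u ∈ e, u ∉ S)).filter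
        (fun e => s ∈ e) = (Finset.univ \ S).image (fun v => s(s, v)) := by
    ext e
    simp only [Finset.mem_filter, Finset.mem_image, Finset.mem_sdiff, Finset.mem_univ,
      true_and]
    constructor
    · rintro ⟨⟨hE, ⟨u, hu, huS⟩, ⟨v, hv, hvS⟩⟩, hse⟩
      refine ⟨v, hvS, ?_⟩
      induction e using Sym2.ind with
      | _ a b =>
        rw [Sym2.mem_iff] at hse hv
        rcases hse with rfl | rfl
        · rcases hv with rfl | rfl
          · exact absurd hs hvS
          · rfl
        · rcases hv with rfl | rfl
          · exact Sym2.eq_swap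
          · exact absurd hs hvS
    · rintro ⟨v, hvS, rfl⟩
      have hvs : v ≠ s := fun h => hvS (h ▸ hs)
      refine ⟨⟨hstar v hvs, ⟨s, ?_, hs⟩, ⟨v, ?_, hvS⟩⟩, ?_⟩ <;>
        simp [Sym2.mem_iff]
  rw [h1, h2, Finset.card_image_of_injOn, Finset.card_sdiff_of_subset (Finset.subset_univ S),
    Finset.card_univ]
  intro x hx y hy hxy
  simp only [Finset.mem_coe, Finset.mem_sdiff, Finset.mem_univ, true_and] at hx hy
  rcases Sym2.eq_iff.mp hxy with ⟨_, h⟩ | ⟨h1', h2'⟩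
  · exact h
  · exact absurd hs (h1' ▸ hy)

lemma stitched_decomp {V : Type*} [Fintype V] (E : Finset (Sym2 V)) (w : Sym2 V → ℕ) (s : V)
    (hstar : ∀ v : V, v ≠ s → s(s, v) ∈ E) (S : Finset V) (hs : s ∈ S) :
    cutWeight E (fun e => (Fintype.card V + 1) * w e + starWeight s e) S =
      (Fintype.card V + 1) * cutWeight E w S + (Fintype.card V - S.card) := by
  rw [← star_cut E s hstar S hs, cutWeight, cutWeight, cutWeight,
    Finset.sum_add_distrib, Finset.mul_sum]

lemma div_unique' {c a b r r' : ℕ} (hr : r < c) (hr' : r' < c)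
    (h : c * a + r = c * b + r') : a = b ∧ r = r' := by
  have hc : 0 < c := lt_of_le_of_lt (Nat.zero_le r) hr
  have hab : a = b := by
    have h1 : (c * a + r) / c = a := by
      rw [Nat.mul_add_div hc, Nat.div_eq_of_lt hr, Nat.add_zero]
    have h2 : (c * b + r') / c = b := by
      rw [Nat.mul_add_div hc, Nat.div_eq_of_lt hr', Nat.add_zero]
    rw [← h1, h, h2]
  subst hab
  exact ⟨rfl, by omega⟩

/-- Under the star-stitched weights the minimum s-t cut is unique. -/
theorem unique_min_st_cut_star_stitched {V : Type*} [Fintype V] (E : Finset (Sym2 V))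
    (w : Sym2 V → ℕ) (s : V) (hstar : ∀ v : V, v ≠ s → s(s, v) ∈ E) :
    ∀ t : V, t ≠ s →
      ∃! S : Finset V, s ∈ S ∧ t ∉ S ∧
        ∀ T : Finset V, s ∈ T → t ∉ T →
          cutWeight E (fun e => (Fintype.card V + 1) * w e + starWeight s e) S ≤
            cutWeight E (fun e => (Fintype.card V + 1) * w e + starWeight s e) T := by
  intro t ht
  set n := Fintype.card V with hn
  set f : Finset V → ℕ :=
    fun S => cutWeight E (fun e => (n + 1) * w e + starWeight s e) S with hf
  set A : Finset V → ℕ := fun S => cutWeight E w S with hA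
  have hdec : ∀ S : Finset V, s ∈ S → f S = (n + 1) * A S + (n - S.card) :=
    fun S hs => stitched_decomp E w s hstar S hs
  have hcard : ∀ S : Finset V, S.card ≤ n := fun S => Finset.card_le_univ S
  -- existence of a minimizer
  obtain ⟨S, hSmem, hSmin⟩ :=
    (Finset.univ.filter (fun S : Finset V => s ∈ S ∧ t ∉ S)).exists_min_image f
      ⟨{s}, by simp [ht]⟩
  simp only [Finset.mem_filter, Finset.mem_univ, true_and] at hSmem
  obtain ⟨hsS, htS⟩ := hSmem
  have hSmin' : ∀ T : Finset V, s ∈ T → t ∉ T → f S ≤ f T := fun T h1 h2 =>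
    hSmin T (by simp [h1, h2])
  refine ⟨S, ⟨hsS, htS, hSmin'⟩, ?_⟩
  rintro T ⟨hsT, htT, hTmin⟩
  -- T is also a minimizer; show T = S
  have hfeq : f T = f S := le_antisymm (hTmin S hsS htS) (hSmin' T hsT htT)
  have hrS : n - S.card < n + 1 := by omega
  have hrT : n - T.card < n + 1 := by omega
  have h1 := div_unique' hrT hrS (by rw [← hdec T hsT, ← hdec S hsS]; exact hfeq)
  have hcardST : T.card = S.card := by have := hcard S; have := hcard T; omega
  have hAeq : A T = A S := h1.1
  -- union and intersection
  have hsU : s ∈ S ∪ T := Finset.mem_union_left _ hsS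
  have hsI : s ∈ S ∩ T := Finset.mem_inter_of_mem hsS hsT
  have htU : t ∉ S ∪ T := fun h => (Finset.mem_union.mp h).elim htS htT
  have htI : t ∉ S ∩ T := fun h => htS (Finset.mem_inter.mp h).1
  have hUmin : f S ≤ f (S ∪ T) := hSmin' _ hsU htU
  have hImin : f S ≤ f (S ∩ T) := hSmin' _ hsI htI
  have hsub : A (S ∪ T) + A (S ∩ T) ≤ A S + A T := cut_submod E w S T
  have hcardUI : (S ∪ T).card + (S ∩ T).card = S.card + T.card :=
    Finset.card_union_add_card_inter S T
  have hUI : f (S ∪ T) + f (S ∩ T) ≤ f S + f T := by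
    rw [hdec _ hsU, hdec _ hsI, hdec _ hsS, hdec _ hsT]
    have hm : (n + 1) * A (S ∪ T) + (n + 1) * A (S ∩ T) ≤
        (n + 1) * A S + (n + 1) * A T := by
      rw [← Nat.mul_add, ← Nat.mul_add]
      exact Nat.mul_le_mul_left _ hsub
    have hc1 := hcard (S ∪ T); have hc2 := hcard (S ∩ T)
    have hc3 := hcard S; have hc4 := hcard T
    have hrem : (n - (S ∪ T).card) + (n - (S ∩ T).card) =
        (n - S.card) + (n - T.card) := by omega
    linarith
  have hfU : f (S ∪ T) = f S := le_antisymm (by linarith) hUmin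
  have h2 := div_unique' (by omega : n - (S ∪ T).card < n + 1) hrS
    (by rw [← hdec _ hsU, ← hdec _ hsS]; exact hfU)
  obtain ⟨hAU, hrU⟩ := h2
  have hcU : (S ∪ T).card = S.card := by have := hcard (S ∪ T); have := hcard S; omega
  have hSU : S ∪ T = S :=
    (Finset.eq_of_subset_of_card_le Finset.subset_union_left (le_of_eq hcU)).symm
  have hTS : T ⊆ S := hSU ▸ Finset.subset_union_right
  exact Finset.eq_of_subset_of_card_le hTS (le_of_eq hcardST.symm)
end

section
/- Binary search case 2: in the same setting, with k ≥ 2 and t' the second-largest element of 𝒯 = ∪_i T_i, if x ≤ t', then either every minimizer S (containing s) of [w, w_s, w_s^{<x}](cut(·)) satisfies w_s^{<x}(cut(S)) < |V∖S| − 1, or there exist at least two distinct minimizers of [w, w_s, w_s^{<x}](cut(·)). -/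
open Finset
open scoped Classical

/-- Indicator weight of star edges `(s, v)` with `v < x`. -/
noncomputable def ltWeight {V : Type*} [LT V] (s x : V) : Sym2 V → ℕ :=
  fun e => if ∃ v : V, v < x ∧ e = Sym2.mk s v then 1 else 0

/-- `S` is a global minimum cut-set of `(V, E)` with respect to the weights `f`. -/
def IsMinCutSet {V : Type*} [Fintype V] (E : Finset (Sym2 V)) (f : Sym2 V → ℕ)
    (S : Finset V) : Prop :=
  S.Nonempty ∧ S ≠ Finset.univ ∧ ∀ T : Finset V, T.Nonempty → T ≠ Finset.univ →
    cutWeight E f S ≤ cutWeight E f T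

/-- The stitched weight `[w, w_s]` (with bound `n = |V|`). -/
noncomputable def stitch1 {V : Type*} [Fintype V] (w : Sym2 V → ℕ) (s : V) :
    Sym2 V → ℕ :=
  fun e => (Fintype.card V + 1) * w e + starWeight s e

/-- The triple-stitched weight `[w, w_s, w_s^{<x}]` (with bound `n = |V|`). -/
noncomputable def stitch2 {V : Type*} [Fintype V] [LT V] (w : Sym2 V → ℕ) (s x : V) :
    Sym2 V → ℕ :=
  fun e => (Fintype.card V + 1) * stitch1 w s e + ltWeight s x e

section Aux

variable {n : ℕ} (E : Finset (Sym2 (Fin n))) (w : Sym2 (Fin n) → ℕ) (s x : Fin n)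

lemma cutWeight_linear (c : ℕ) (f g : Sym2 (Fin n) → ℕ) (S : Finset (Fin n)) :
    cutWeight E (fun e => c * f e + g e) S = c * cutWeight E f S + cutWeight E g S := by
  unfold cutWeight
  rw [Finset.mul_sum, ← Finset.sum_add_distrib]

lemma cutWeight_stitch1 (S : Finset (Fin n)) :
    cutWeight E (stitch1 w s) S
      = (Fintype.card (Fin n) + 1) * cutWeight E w S + cutWeight E (starWeight s) S :=
  cutWeight_linear E _ _ _ _

lemma cutWeight_stitch2 (S : Finset (Fin n)) :
    cutWeight E (stitch2 w s x) S
      = (Fintype.card (Fin n) + 1) * cutWeight E (stitch1 w s) S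
        + cutWeight E (ltWeight s x) S :=
  cutWeight_linear E _ _ _ _

lemma cutWeight_star (hstar : ∀ v : Fin n, v ≠ s → Sym2.mk s v ∈ E)
    {S : Finset (Fin n)} (hs : s ∈ S) :
    cutWeight E (starWeight s) S = (Finset.univ \ S).card := by
  have h1 : cutWeight E (starWeight s) S =
      ((E.filter (fun e => (∃ u ∈ e, u ∈ S) ∧ ∃ u ∈ e, u ∉ S)).filter
        (fun e => s ∈ e)).card := by
    rw [Finset.card_filter]
    simp only [cutWeight, starWeight]
    congr!
  rw [h1]
  have hset : (E.filter (fun e => (∃ u ∈ e, u ∈ S) ∧ ∃ u ∈ e, u ∉ S)).filter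
      (fun e => s ∈ e) = (Finset.univ \ S).image (fun v => Sym2.mk s v) := by
    ext e
    simp only [Finset.mem_filter, Finset.mem_image, Finset.mem_sdiff, Finset.mem_univ,
      true_and]
    constructor
    · rintro ⟨⟨heE, hcross⟩, hse⟩
      obtain ⟨u, hu, huS⟩ := hcross.2
      have hus : s ≠ u := fun h => huS (h ▸ hs)
      exact ⟨u, huS, ((Sym2.mem_and_mem_iff hus).mp ⟨hse, hu⟩).symm⟩
    · rintro ⟨v, hvS, rfl⟩
      have hvs : v ≠ s := fun h => hvS (h ▸ hs)
      exact ⟨⟨hstar v hvs, ⟨s, Sym2.mem_mk_left s v, hs⟩,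
        ⟨v, Sym2.mem_mk_right s v, hvS⟩⟩, Sym2.mem_mk_left s v⟩
  rw [hset]
  apply Finset.card_image_of_injOn
  intro a _ b _ hab
  rcases Sym2.eq_iff.mp hab with ⟨_, h⟩ | ⟨h1, h2⟩
  · exact h
  · rw [h2, h1]

lemma cutWeight_lt (hstar : ∀ v : Fin n, v ≠ s → Sym2.mk s v ∈ E)
    {S : Finset (Fin n)} (hs : s ∈ S) :
    cutWeight E (ltWeight s x) S
      = ((Finset.univ \ S).filter (fun v => v < x)).card := by
  have h1 : cutWeight E (ltWeight s x) S =
      ((E.filter (fun e => (∃ u ∈ e, u ∈ S) ∧ ∃ u ∈ e, u ∉ S)).filter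
        (fun e => ∃ v : Fin n, v < x ∧ e = Sym2.mk s v)).card := by
    rw [Finset.card_filter]
    simp only [cutWeight, ltWeight]
    congr!
  rw [h1]
  have hset : (E.filter (fun e => (∃ u ∈ e, u ∈ S) ∧ ∃ u ∈ e, u ∉ S)).filter
      (fun e => ∃ v : Fin n, v < x ∧ e = Sym2.mk s v)
      = ((Finset.univ \ S).filter (fun v => v < x)).image (fun v => Sym2.mk s v) := by
    ext e
    simp only [Finset.mem_filter, Finset.mem_image, Finset.mem_sdiff, Finset.mem_univ,
      true_and]
    constructor
    · rintro ⟨⟨heE, hcross⟩, ⟨v, hvx, rfl⟩⟩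
      obtain ⟨u, hu, huS⟩ := hcross.2
      have hus : u ≠ s := fun h => huS (h ▸ hs)
      have huv : u = v := by
        rcases Sym2.mem_iff.mp hu with h | h
        · exact absurd h hus
        · exact h
      exact ⟨v, ⟨huv ▸ huS, hvx⟩, rfl⟩
    · rintro ⟨v, ⟨hvS, hvx⟩, rfl⟩
      have hvs : v ≠ s := fun h => hvS (h ▸ hs)
      exact ⟨⟨hstar v hvs, ⟨s, Sym2.mem_mk_left s v, hs⟩,
        ⟨v, Sym2.mem_mk_right s v, hvS⟩⟩, ⟨v, hvx, rfl⟩⟩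
  rw [hset]
  apply Finset.card_image_of_injOn
  intro a _ b _ hab
  rcases Sym2.eq_iff.mp hab with ⟨_, h⟩ | ⟨h1, h2⟩
  · exact h
  · rw [h2, h1]

lemma ltCut_le (T : Finset (Fin n)) :
    cutWeight E (ltWeight s x) T ≤ Fintype.card (Fin n) := by
  have h1 : cutWeight E (ltWeight s x) T =
      ((E.filter (fun e => (∃ u ∈ e, u ∈ T) ∧ ∃ u ∈ e, u ∉ T)).filter
        (fun e => ∃ v : Fin n, v < x ∧ e = Sym2.mk s v)).card := by
    rw [Finset.card_filter]
    simp only [cutWeight, ltWeight]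
    congr!
  rw [h1]
  calc ((E.filter _).filter _).card
      ≤ (Finset.univ.image (fun v : Fin n => Sym2.mk s v)).card := by
        apply Finset.card_le_card
        intro e he
        simp only [Finset.mem_filter] at he
        obtain ⟨_, v, _, rfl⟩ := he
        exact Finset.mem_image_of_mem _ (Finset.mem_univ v)
    _ ≤ Finset.univ.card := Finset.card_image_le
    _ = Fintype.card (Fin n) := Finset.card_univ

lemma div_key {c a b r r' : ℕ} (h1 : r < c) (h2 : r' < c)
    (h : c * a + r ≤ c * b + r') : a ≤ b := by
  by_contra hc
  push_neg at hc
  have h3 : c * (b + 1) ≤ c * a := Nat.mul_le_mul_left c hc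
  rw [Nat.mul_succ] at h3
  have : c * b + r' < c * a + r := by
    calc c * b + r' < c * b + c := by omega
      _ ≤ c * a := h3
      _ ≤ c * a + r := Nat.le_add_right _ _
  omega

lemma mod_key {c a b r r' : ℕ} (h1 : r < c) (h2 : r' < c)
    (h : c * a + r = c * b + r') : r = r' := by
  have := congrArg (· % c) h
  simpa [Nat.mul_add_mod, Nat.mod_eq_of_lt h1, Nat.mod_eq_of_lt h2] using this

lemma stitch2_min_imp {S : Finset (Fin n)} (h : IsMinCutSet E (stitch2 w s x) S) :
    IsMinCutSet E (stitch1 w s) S := by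
  refine ⟨h.1, h.2.1, fun T hT1 hT2 => ?_⟩
  have hh := h.2.2 T hT1 hT2
  rw [cutWeight_stitch2, cutWeight_stitch2] at hh
  exact div_key (Nat.lt_succ_of_le (ltCut_le E s x S))
    (Nat.lt_succ_of_le (ltCut_le E s x T)) hh

lemma size_eq (hstar : ∀ v : Fin n, v ≠ s → Sym2.mk s v ∈ E)
    {S S' : Finset (Fin n)} (hs : s ∈ S) (hs' : s ∈ S')
    (h1 : IsMinCutSet E (stitch1 w s) S) (h2 : IsMinCutSet E (stitch1 w s) S') :
    (Finset.univ \ S).card = (Finset.univ \ S').card := by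
  have heq : cutWeight E (stitch1 w s) S = cutWeight E (stitch1 w s) S' :=
    le_antisymm (h1.2.2 S' h2.1 h2.2.1) (h2.2.2 S h1.1 h1.2.1)
  rw [cutWeight_stitch1, cutWeight_stitch1, cutWeight_star E s hstar hs,
    cutWeight_star E s hstar hs'] at heq
  exact mod_key (Nat.lt_succ_of_le (Finset.card_le_univ _))
    (Nat.lt_succ_of_le (Finset.card_le_univ _)) heq

lemma lt_cmp {S₀ S' : Finset (Fin n)}
    (hmin₀ : IsMinCutSet E (stitch2 w s x) S₀)
    (h₀1 : IsMinCutSet E (stitch1 w s) S₀)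
    (hm' : IsMinCutSet E (stitch1 w s) S') :
    cutWeight E (ltWeight s x) S₀ ≤ cutWeight E (ltWeight s x) S' := by
  have hh := hmin₀.2.2 S' hm'.1 hm'.2.1
  rw [cutWeight_stitch2, cutWeight_stitch2] at hh
  have hst : cutWeight E (stitch1 w s) S₀ = cutWeight E (stitch1 w s) S' :=
    le_antisymm (h₀1.2.2 S' hm'.1 hm'.2.1) (hm'.2.2 S₀ h₀1.1 h₀1.2.1)
  rw [hst] at hh
  omega

end Aux

/-- Binary search, case 2: with at least two global minimum cut-sets and x at most
the second-largest separated vertex, either every minimizer S (with s ∈ S) of the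
triple-stitched cut weight satisfies w_s^{<x}(cut(S)) < |V ∖ S| - 1, or there are
at least two distinct such minimizers. -/
theorem binary_search_case_two (n : ℕ) (E : Finset (Sym2 (Fin n)))
    (w : Sym2 (Fin n) → ℕ) (s : Fin n)
    (hstar : ∀ v : Fin n, v ≠ s → Sym2.mk s v ∈ E)
    (S₁ S₂ : Finset (Fin n)) (hs₁ : s ∈ S₁) (hs₂ : s ∈ S₂)
    (hm₁ : IsMinCutSet E (stitch1 w s) S₁) (hm₂ : IsMinCutSet E (stitch1 w s) S₂)
    (hS₁₂ : S₁ ≠ S₂)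
    (tmax t' : Fin n)
    (hmax : ∃ S : Finset (Fin n), s ∈ S ∧ IsMinCutSet E (stitch1 w s) S ∧ tmax ∉ S)
    (ht' : ∃ S : Finset (Fin n), s ∈ S ∧ IsMinCutSet E (stitch1 w s) S ∧ t' ∉ S)
    (hlt : t' < tmax)
    (hsecond : ∀ u : Fin n,
      (∃ S : Finset (Fin n), s ∈ S ∧ IsMinCutSet E (stitch1 w s) S ∧ u ∉ S) →
        u ≠ tmax → u ≤ t')
    (x : Fin n) (hx : x ≤ t') :
    (∀ S : Finset (Fin n), s ∈ S → IsMinCutSet E (stitch2 w s x) S →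
        cutWeight E (ltWeight s x) S + 1 < (Finset.univ \ S).card) ∨
      (∃ A B : Finset (Fin n), s ∈ A ∧ s ∈ B ∧ IsMinCutSet E (stitch2 w s x) A ∧
        IsMinCutSet E (stitch2 w s x) B ∧ A ≠ B) := by
  classical
  by_cases hfirst : ∀ S : Finset (Fin n), s ∈ S → IsMinCutSet E (stitch2 w s x) S →
      cutWeight E (ltWeight s x) S + 1 < (Finset.univ \ S).card
  · exact Or.inl hfirst
  right
  push_neg at hfirst
  obtain ⟨S₀, hsS₀, hmin₀, hge⟩ := hfirst
  have h₀1 : IsMinCutSet E (stitch1 w s) S₀ := stitch2_min_imp E w s x hmin₀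
  obtain ⟨S', hsS', hm', ht'S⟩ := ht'
  obtain ⟨Smax, hsM, hmM, htM⟩ := hmax
  -- notation
  set m := (Finset.univ \ S₀).card with hm
  have hsz' : (Finset.univ \ S').card = m := size_eq E w s hstar hsS' hsS₀ hm' h₀1
  have hszM : (Finset.univ \ Smax).card = m := size_eq E w s hstar hsM hsS₀ hmM h₀1
  -- ltCut values via partition
  have hpart : ∀ S : Finset (Fin n), s ∈ S → IsMinCutSet E (stitch1 w s) S →
      cutWeight E (ltWeight s x) S
        + ((Finset.univ \ S).filter (fun v => ¬ v < x)).card = (Finset.univ \ S).card := by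
    intro S hsS _
    rw [cutWeight_lt E s x hstar hsS]
    exact Finset.card_filter_add_card_filter_not _
  have hp₀ := hpart S₀ hsS₀ h₀1
  have hp' := hpart S' hsS' hm'
  have hpM := hpart Smax hsM hmM
  -- comparisons
  have hc' : cutWeight E (ltWeight s x) S₀ ≤ cutWeight E (ltWeight s x) S' :=
    lt_cmp E w s x hmin₀ h₀1 hm'
  have hcM : cutWeight E (ltWeight s x) S₀ ≤ cutWeight E (ltWeight s x) Smax :=
    lt_cmp E w s x hmin₀ h₀1 hmM
  have ht'mem : t' ∈ (Finset.univ \ S').filter (fun v => ¬ v < x) := by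
    simp only [Finset.mem_filter, Finset.mem_sdiff, Finset.mem_univ, true_and]
    exact ⟨ht'S, not_lt.mpr hx⟩
  have htMmem : tmax ∈ (Finset.univ \ Smax).filter (fun v => ¬ v < x) := by
    simp only [Finset.mem_filter, Finset.mem_sdiff, Finset.mem_univ, true_and]
    exact ⟨htM, not_lt.mpr (hx.trans hlt.le)⟩
  by_cases hcase : S' = Smax
  · -- both t' and tmax are in the complement of S', contradiction
    exfalso
    subst hcase
    have hsub : ({t', tmax} : Finset (Fin n)) ⊆ (Finset.univ \ S').filter (fun v => ¬ v < x) := by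
      intro u hu
      rcases Finset.mem_insert.mp hu with rfl | hu
      · exact ht'mem
      · rw [Finset.mem_singleton] at hu; subst hu; exact htMmem
    have h2 : 2 ≤ ((Finset.univ \ S').filter (fun v => ¬ v < x)).card := by
      calc 2 = ({t', tmax} : Finset (Fin n)).card := (Finset.card_pair hlt.ne).symm
        _ ≤ _ := Finset.card_le_card hsub
    omega
  · -- S' and Smax are two distinct stitch2-minimizers
    have hb' : 1 ≤ ((Finset.univ \ S').filter (fun v => ¬ v < x)).card :=
      Finset.card_pos.mpr ⟨t', ht'mem⟩
    have hbM : 1 ≤ ((Finset.univ \ Smax).filter (fun v => ¬ v < x)).card :=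
      Finset.card_pos.mpr ⟨tmax, htMmem⟩
    have heq' : cutWeight E (ltWeight s x) S' = cutWeight E (ltWeight s x) S₀ := by omega
    have heqM : cutWeight E (ltWeight s x) Smax = cutWeight E (ltWeight s x) S₀ := by omega
    have hmk : ∀ S : Finset (Fin n), s ∈ S → IsMinCutSet E (stitch1 w s) S →
        cutWeight E (ltWeight s x) S = cutWeight E (ltWeight s x) S₀ →
        IsMinCutSet E (stitch2 w s x) S := by
      intro S hsS hS1 hlteq
      refine ⟨hS1.1, hS1.2.1, fun T hT1 hT2 => ?_⟩
      have hst : cutWeight E (stitch1 w s) S = cutWeight E (stitch1 w s) S₀ :=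
        le_antisymm (hS1.2.2 S₀ h₀1.1 h₀1.2.1) (h₀1.2.2 S hS1.1 hS1.2.1)
      calc cutWeight E (stitch2 w s x) S
          = cutWeight E (stitch2 w s x) S₀ := by
            rw [cutWeight_stitch2, cutWeight_stitch2, hst, hlteq]
        _ ≤ cutWeight E (stitch2 w s x) T := hmin₀.2.2 T hT1 hT2
    exact ⟨S', Smax, hsS', hsM, hmk S' hsS' hm' heq', hmk Smax hsM hmM heqM, hcase⟩
end
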